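/- A 2-connected outerplanar graph with at least 5 vertices is prime. Consequently, an outerplanar graph with at least 5 vertices is prime if and only if it is 2-connected. -/

import Mathlib

variable {V : Type*}

/-- A split of a simple graph. -/
def IsSplit (G : SimpleGraph V) (A B : Set V) : Prop :=
  A ∪ B = Set.univ ∧ Disjoint A B ∧ 2 ≤ A.ncard ∧ 2 ≤ B.ncard ∧
    ∃ A' B', A' ⊆ A ∧ B' ⊆ B ∧ ∀ x ∈ A, ∀ y ∈ B, (G.Adj x y ↔ (x ∈ A' ∧ y ∈ B'))

/-- A graph is prime if it has no split. -/
def IsPrime (G : SimpleGraph V) : Prop := ¬ ∃ A B : Set V, IsSplit G A B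

/-- Local complementation at a vertex. -/
def localComp (G : SimpleGraph V) (v : V) : SimpleGraph V where
  Adj x y := x ≠ y ∧ Xor' (G.Adj x y) (G.Adj v x ∧ G.Adj v y)
  symm := by
    constructor
    intro x y h
    refine ⟨h.1.symm, ?_⟩
    rw [SimpleGraph.adj_comm, and_comm]
    exact h.2
  loopless := by constructor; intro x h; exact h.1 rfl

/-- Pivoting an edge: G ∧ vw = G*v*w*v. -/
def pivot (G : SimpleGraph V) (v w : V) : SimpleGraph V :=
  localComp (localComp (localComp G v) w) v

/-- Vertex deletion. -/
def deleteVert (G : SimpleGraph V) (v : V) : SimpleGraph {x : V // x ≠ v} :=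
  G.induce {x | x ≠ v}

/-- Two vertices are twins if every other vertex is adjacent to one iff to the other. -/
def Twins (G : SimpleGraph V) (u w : V) : Prop :=
  ∀ x, x ≠ u → x ≠ w → (G.Adj x u ↔ G.Adj x w)

/-- A graph is outerplanar iff it admits a one-page book embedding: a linear order of
the vertices in which no two edges cross. -/
def Outerplanar {V : Type*} (G : SimpleGraph V) : Prop :=
  ∃ f : V → ℕ, Function.Injective f ∧
    ∀ a b c d, G.Adj a b → G.Adj c d → f a < f c → f c < f b → f b < f d → False

/-- A graph is 2-connected if it has at least 3 vertices and deleting any vertex leaves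
a connected graph. -/
def TwoConnected {V : Type*} (G : SimpleGraph V) : Prop :=
  3 ≤ Nat.card V ∧ ∀ v : V, (G.induce {x | x ≠ v}).Connected

section Aux
variable {G : SimpleGraph V}

lemma sep_not_connected {v a b : V} {S : Set V}
    (ha : a ∈ S) (hav : a ≠ v) (hb : b ∉ S) (hbv : b ≠ v)
    (hsep : ∀ x ∈ S, ∀ y, y ∉ S → y ≠ v → ¬ G.Adj x y) :
    ¬ (G.induce {x | x ≠ v}).Connected := by
  intro hconn
  obtain ⟨w⟩ := hconn.preconnected ⟨a, hav⟩ ⟨b, hbv⟩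
  have key : ∀ (x y : {x : V // x ∈ {x : V | x ≠ v}}) (w : (G.induce {x | x ≠ v}).Walk x y),
      x.1 ∈ S → y.1 ∈ S := by
    intro x y w
    induction w with
    | nil => exact id
    | @cons u z _ h p ih =>
      intro hx
      apply ih
      by_contra hz
      exact hsep _ hx _ hz z.2 (SimpleGraph.comap_adj.mp h)
  exact hb (key _ _ w ha)

/-- The "small side" case: all `A'`-`B'` cross edges go through one vertex `v`. -/
lemma small_side [Finite V]
    (h2 : ∀ v : V, (G.induce {x | x ≠ v}).Connected)
    {A B A' B' : Set V} (hcov : A ∪ B = Set.univ) (hdisj : Disjoint A B)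
    (hA2 : 2 ≤ A.ncard) (hB2 : 2 ≤ B.ncard)
    (hadj : ∀ x ∈ A, ∀ y ∈ B, (G.Adj x y ↔ (x ∈ A' ∧ y ∈ B')))
    {v : V} (hvA : v ∈ A) (hA' : A' ⊆ {v}) : False := by
  obtain ⟨a, haA, hav⟩ := Set.exists_ne_of_one_lt_ncard (s := A) (by omega) v
  obtain ⟨b, hbB⟩ := Set.nonempty_of_ncard_ne_zero (s := B) (by omega)
  have hbv : b ≠ v := fun h => Set.disjoint_left.mp hdisj hvA (h ▸ hbB)
  refine absurd (h2 v) (sep_not_connected (S := A \ {v}) (a := a) (b := b)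
    ⟨haA, hav⟩ hav (fun h => Set.disjoint_left.mp hdisj h.1 hbB) hbv ?_)
  intro x hx y hy hyv hxy
  have hyB : y ∈ B := by
    have : y ∈ A ∪ B := hcov ▸ Set.mem_univ y
    rcases this with h | h
    · exact absurd ⟨h, hyv⟩ hy
    · exact h
  have := (hadj x hx.1 y hyB).mp hxy
  exact hx.2 (hA' this.1)

/-- The main case contradiction, once an arc with its two endpoints is identified. -/
lemma arc_contra [Finite V]
    (h2 : ∀ v : V, (G.induce {x | x ≠ v}).Connected)
    {A B A' B' : Set V} (hcov : A ∪ B = Set.univ) (hdisj : Disjoint A B)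
    (hA'A : A' ⊆ A) (hB'B : B' ⊆ B)
    (hadj : ∀ x ∈ A, ∀ y ∈ B, (G.Adj x y ↔ (x ∈ A' ∧ y ∈ B')))
    {α β z : V} (hα : α ∈ A') (hβ : β ∈ B') {I : Set V}
    (hzI : z ∈ I) (hαI : α ∉ I) (hβI : β ∉ I)
    (hclosed : ∀ w ∈ I, ∀ y, G.Adj w y → y ∈ I ∨ y = α ∨ y = β)
    (hIA' : ∀ w ∈ I, w ∉ A') (hIB' : ∀ w ∈ I, w ∉ B') : False := by
  have hmem : ∀ x : V, x ∈ A ∨ x ∈ B := fun x => by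
    have : x ∈ A ∪ B := hcov ▸ Set.mem_univ x
    exact this
  have hαβ : α ≠ β := fun h => Set.disjoint_left.mp hdisj (hA'A hα) (h ▸ hB'B hβ)
  by_cases hWB : ∃ w ∈ I, w ∈ B
  · obtain ⟨w, hwI, hwB⟩ := hWB
    refine absurd (h2 β) (sep_not_connected (S := {x | x ∈ I ∧ x ∈ B}) (a := w) (b := α)
      ⟨hwI, hwB⟩ (fun h => hβI (h ▸ hwI)) ?_ hαβ ?_)
    · intro h
      exact Set.disjoint_left.mp hdisj (hA'A hα) h.2
    · rintro x hx y hy hyβ hxy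
      rcases hclosed x hx.1 y hxy with hyI | rfl | rfl
      · rcases hmem y with hyA | hyB
        · exact hIA' y hyI ((hadj y hyA x hx.2).mp hxy.symm).1
        · exact hy ⟨hyI, hyB⟩
      · exact hIB' x hx.1 ((hadj y (hA'A hα) x hx.2).mp hxy.symm).2
      · exact hyβ rfl
  · push_neg at hWB
    refine absurd (h2 α) (sep_not_connected (S := I) (a := z) (b := β)
      hzI (fun h => hαI (h ▸ hzI)) hβI (fun h => hαβ h.symm) ?_)
    intro x hx y hy hyα hxy
    have hxA : x ∈ A := (hmem x).resolve_right (hWB x hx)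
    rcases hclosed x hx y hxy with hyI | rfl | rfl
    · exact hy hyI
    · exact hyα rfl
    · exact hIA' x hx ((hadj x hxA y (hB'B hβ)).mp hxy).1

/-- The main case: two vertices on each side of the split complete-bipartite core,
in the interleaved order `f a1 < f b1 < f a2 < f b2`. -/
lemma core [Finite V] {f : V → ℕ} (hf : Function.Injective f)
    (hout : ∀ a b c d, G.Adj a b → G.Adj c d → f a < f c → f c < f b → f b < f d → False)
    (hcard : 5 ≤ Nat.card V)
    (h2 : ∀ v : V, (G.induce {x | x ≠ v}).Connected)
    {A B A' B' : Set V} (hcov : A ∪ B = Set.univ) (hdisj : Disjoint A B)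
    (hA'A : A' ⊆ A) (hB'B : B' ⊆ B)
    (hadj : ∀ x ∈ A, ∀ y ∈ B, (G.Adj x y ↔ (x ∈ A' ∧ y ∈ B')))
    {a1 a2 b1 b2 : V} (ha1 : a1 ∈ A') (ha2 : a2 ∈ A') (hb1 : b1 ∈ B') (hb2 : b2 ∈ B')
    (ho1 : f a1 < f b1) (ho2 : f b1 < f a2) (ho3 : f a2 < f b2) : False := by
  have adj' : ∀ x ∈ A', ∀ y ∈ B', G.Adj x y :=
    fun x hx y hy => (hadj x (hA'A hx) y (hB'B hy)).mpr ⟨hx, hy⟩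
  have e11 : G.Adj a1 b1 := adj' _ ha1 _ hb1
  have e12 : G.Adj a1 b2 := adj' _ ha1 _ hb2
  have e21 : G.Adj a2 b1 := adj' _ ha2 _ hb1
  have e22 : G.Adj a2 b2 := adj' _ ha2 _ hb2
  -- A' = {a1, a2}
  have hA'sub : ∀ z ∈ A', z = a1 ∨ z = a2 := by
    intro z hz
    by_contra hcon
    push_neg at hcon
    obtain ⟨hz1, hz2⟩ := hcon
    have ez1 : G.Adj z b1 := adj' _ hz _ hb1
    have ez2 : G.Adj z b2 := adj' _ hz _ hb2
    have hne1 : f z ≠ f a1 := fun h => hz1 (hf h)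
    have hne2 : f z ≠ f a2 := fun h => hz2 (hf h)
    have hne3 : f z ≠ f b1 := fun h => ez1.ne (hf h)
    have hne4 : f z ≠ f b2 := fun h => ez2.ne (hf h)
    rcases (show f z < f a1 ∨ (f a1 < f z ∧ f z < f b1) ∨ (f b1 < f z ∧ f z < f a2) ∨
        (f a2 < f z ∧ f z < f b2) ∨ f b2 < f z by omega) with h | h | h | h | h
    · exact hout z b1 a1 b2 ez1 e12 (by omega) (by omega) (by omega)
    · exact hout a1 b1 z b2 e11 ez2 (by omega) (by omega) (by omega)
    · exact hout b1 a2 z b2 e21.symm ez2 (by omega) (by omega) (by omega)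
    · exact hout b1 z a2 b2 ez1.symm e22 (by omega) (by omega) (by omega)
    · exact hout a1 b2 b1 z e12 ez1.symm (by omega) (by omega) (by omega)
  -- B' = {b1, b2}
  have hB'sub : ∀ z ∈ B', z = b1 ∨ z = b2 := by
    intro z hz
    by_contra hcon
    push_neg at hcon
    obtain ⟨hz1, hz2⟩ := hcon
    have ez1 : G.Adj a1 z := adj' _ ha1 _ hz
    have ez2 : G.Adj a2 z := adj' _ ha2 _ hz
    have hne1 : f z ≠ f b1 := fun h => hz1 (hf h)
    have hne2 : f z ≠ f b2 := fun h => hz2 (hf h)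
    have hne3 : f z ≠ f a1 := fun h => ez1.ne (hf h).symm
    have hne4 : f z ≠ f a2 := fun h => ez2.ne (hf h).symm
    rcases (show f z < f a1 ∨ (f a1 < f z ∧ f z < f b1) ∨ (f b1 < f z ∧ f z < f a2) ∨
        (f a2 < f z ∧ f z < f b2) ∨ f b2 < f z by omega) with h | h | h | h | h
    · exact hout z a2 a1 b2 ez2.symm e12 (by omega) (by omega) (by omega)
    · exact hout a1 b1 z a2 e11 ez2.symm (by omega) (by omega) (by omega)
    · exact hout a1 z b1 a2 ez1 e21.symm (by omega) (by omega) (by omega)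
    · exact hout a1 z a2 b2 ez1 e22 (by omega) (by omega) (by omega)
    · exact hout a1 b2 a2 z e12 ez2 (by omega) (by omega) (by omega)
  -- no edge leaves an arc
  have NC : ∀ {p q x y : V}, G.Adj p q → G.Adj x y → ¬(f p < f x ∧ f x < f q ∧ f q < f y) :=
    fun h1 h2 h => hout _ _ _ _ h1 h2 h.1 h.2.1 h.2.2
  have harc : ∀ x y, G.Adj x y →
      ((f x < f a1 → f y ≤ f a1 ∨ f b2 ≤ f y) ∧
       (f a1 < f x ∧ f x < f b1 → f a1 ≤ f y ∧ f y ≤ f b1) ∧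
       (f b1 < f x ∧ f x < f a2 → f b1 ≤ f y ∧ f y ≤ f a2) ∧
       (f a2 < f x ∧ f x < f b2 → f a2 ≤ f y ∧ f y ≤ f b2) ∧
       (f b2 < f x → f y ≤ f a1 ∨ f b2 ≤ f y)) := by
    intro x y hxy
    have n1 := NC hxy e12
    have n2 := NC hxy.symm e11
    have n3 := NC e11 hxy
    have n4 := NC hxy.symm e21.symm
    have n5 := NC e21.symm hxy
    have n6 := NC hxy.symm e22
    have n7 := NC e22 hxy
    have n8 := NC e12 hxy.symm
    omega
  -- a fifth vertex
  have hzout : ∃ z : V, z ≠ a1 ∧ z ≠ b1 ∧ z ≠ a2 ∧ z ≠ b2 := by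
    by_contra hcon
    push_neg at hcon
    have hsub : (Set.univ : Set V) ⊆ {a1, b1, a2, b2} := by
      intro x _
      simp only [Set.mem_insert_iff, Set.mem_singleton_iff]
      by_cases h1 : x = a1; · tauto
      by_cases h2 : x = b1; · tauto
      by_cases h3 : x = a2; · tauto
      have := hcon x h1 h2 h3; tauto
    have hle := Set.ncard_le_ncard hsub (Set.toFinite _)
    rw [Set.ncard_univ] at hle
    have h4 : ({a1, b1, a2, b2} : Set V).ncard ≤ 4 := by
      refine le_trans (Set.ncard_insert_le _ _) ?_
      have := Set.ncard_insert_le b1 ({a2, b2} : Set V)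
      have := Set.ncard_insert_le a2 ({b2} : Set V)
      simp only [Set.ncard_singleton] at *
      omega
    omega
  obtain ⟨z, hz1, hz2, hz3, hz4⟩ := hzout
  have hfz1 : f z ≠ f a1 := fun h => hz1 (hf h)
  have hfz2 : f z ≠ f b1 := fun h => hz2 (hf h)
  have hfz3 : f z ≠ f a2 := fun h => hz3 (hf h)
  have hfz4 : f z ≠ f b2 := fun h => hz4 (hf h)
  have hIA'gen : ∀ (I : Set V), (∀ w, w ∈ I → (f a1 < f w ∧ f w < f b2 ∧ f w ≠ f b1 ∧ f w ≠ f a2) ∨ (f w < f a1 ∨ f b2 < f w)) →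
      (∀ w ∈ I, w ∉ A') ∧ (∀ w ∈ I, w ∉ B') := by
    intro I hI
    constructor
    · intro w hw hwA'
      rcases hA'sub w hwA' with rfl | rfl <;> rcases hI w hw with h | h <;> omega
    · intro w hw hwB'
      rcases hB'sub w hwB' with rfl | rfl <;> rcases hI w hw with h | h <;> omega
  rcases (show f z < f a1 ∨ (f a1 < f z ∧ f z < f b1) ∨ (f b1 < f z ∧ f z < f a2) ∨
      (f a2 < f z ∧ f z < f b2) ∨ f b2 < f z by omega) with hr | hr | hr | hr | hr
  -- wrap arc
  case _ =>
    set I : Set V := {w | f w < f a1 ∨ f b2 < f w} with hI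
    have hgen := hIA'gen I (fun w hw => Or.inr hw)
    refine arc_contra h2 hcov hdisj hA'A hB'B hadj ha1 hb2 (z := z) (I := I)
      (Or.inl hr) (by simp only [hI, Set.mem_setOf_eq]; omega)
      (by simp only [hI, Set.mem_setOf_eq]; omega) ?_ hgen.1 hgen.2
    intro w hw y hxy
    have hbd : f y ≤ f a1 ∨ f b2 ≤ f y := by
      rcases hw with h | h
      · exact (harc w y hxy).1 h
      · exact (harc w y hxy).2.2.2.2 h
    rcases (show f y < f a1 ∨ f y = f a1 ∨ f y = f b2 ∨ f b2 < f y by omega) with h | h | h | h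
    · exact Or.inl (Or.inl h)
    · exact Or.inr (Or.inl (hf h))
    · exact Or.inr (Or.inr (hf h))
    · exact Or.inl (Or.inr h)
  case _ =>
    set I : Set V := {w | f a1 < f w ∧ f w < f b1} with hI
    have hgen := hIA'gen I (by
      intro w hw
      simp only [hI, Set.mem_setOf_eq] at hw
      exact Or.inl ⟨by omega, by omega, by omega, by omega⟩)
    refine arc_contra h2 hcov hdisj hA'A hB'B hadj ha1 hb1 (z := z) (I := I)
      hr (by simp only [hI, Set.mem_setOf_eq]; omega)
      (by simp only [hI, Set.mem_setOf_eq]; omega) ?_ hgen.1 hgen.2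
    intro w hw y hxy
    have hbd := (harc w y hxy).2.1 hw
    rcases (show f y = f a1 ∨ f y = f b1 ∨ (f a1 < f y ∧ f y < f b1) by omega) with h | h | h
    · exact Or.inr (Or.inl (hf h))
    · exact Or.inr (Or.inr (hf h))
    · exact Or.inl h
  case _ =>
    set I : Set V := {w | f b1 < f w ∧ f w < f a2} with hI
    have hgen := hIA'gen I (by
      intro w hw
      simp only [hI, Set.mem_setOf_eq] at hw
      exact Or.inl ⟨by omega, by omega, by omega, by omega⟩)
    refine arc_contra h2 hcov hdisj hA'A hB'B hadj ha2 hb1 (z := z) (I := I)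
      hr (by simp only [hI, Set.mem_setOf_eq]; omega)
      (by simp only [hI, Set.mem_setOf_eq]; omega) ?_ hgen.1 hgen.2
    intro w hw y hxy
    have hbd := (harc w y hxy).2.2.1 hw
    rcases (show f y = f b1 ∨ f y = f a2 ∨ (f b1 < f y ∧ f y < f a2) by omega) with h | h | h
    · exact Or.inr (Or.inr (hf h))
    · exact Or.inr (Or.inl (hf h))
    · exact Or.inl h
  case _ =>
    set I : Set V := {w | f a2 < f w ∧ f w < f b2} with hI
    have hgen := hIA'gen I (by
      intro w hw
      simp only [hI, Set.mem_setOf_eq] at hw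
      exact Or.inl ⟨by omega, by omega, by omega, by omega⟩)
    refine arc_contra h2 hcov hdisj hA'A hB'B hadj ha2 hb2 (z := z) (I := I)
      hr (by simp only [hI, Set.mem_setOf_eq]; omega)
      (by simp only [hI, Set.mem_setOf_eq]; omega) ?_ hgen.1 hgen.2
    intro w hw y hxy
    have hbd := (harc w y hxy).2.2.2.1 hw
    rcases (show f y = f a2 ∨ f y = f b2 ∨ (f a2 < f y ∧ f y < f b2) by omega) with h | h | h
    · exact Or.inr (Or.inl (hf h))
    · exact Or.inr (Or.inr (hf h))
    · exact Or.inl h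
  case _ =>
    set I : Set V := {w | f w < f a1 ∨ f b2 < f w} with hI
    have hgen := hIA'gen I (fun w hw => Or.inr hw)
    refine arc_contra h2 hcov hdisj hA'A hB'B hadj ha1 hb2 (z := z) (I := I)
      (Or.inr hr) (by simp only [hI, Set.mem_setOf_eq]; omega)
      (by simp only [hI, Set.mem_setOf_eq]; omega) ?_ hgen.1 hgen.2
    intro w hw y hxy
    have hbd : f y ≤ f a1 ∨ f b2 ≤ f y := by
      rcases hw with h | h
      · exact (harc w y hxy).1 h
      · exact (harc w y hxy).2.2.2.2 h
    rcases (show f y < f a1 ∨ f y = f a1 ∨ f y = f b2 ∨ f b2 < f y by omega) with h | h | h | h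
    · exact Or.inl (Or.inl h)
    · exact Or.inr (Or.inl (hf h))
    · exact Or.inr (Or.inr (hf h))
    · exact Or.inl (Or.inr h)
end Aux

section Aux2
variable {G : SimpleGraph V}

lemma core4 [Finite V] {f : V → ℕ} (hf : Function.Injective f)
    (hout : ∀ a b c d, G.Adj a b → G.Adj c d → f a < f c → f c < f b → f b < f d → False)
    (hcard : 5 ≤ Nat.card V)
    (h2 : ∀ v : V, (G.induce {x | x ≠ v}).Connected)
    {A B A' B' : Set V} (hcov : A ∪ B = Set.univ) (hdisj : Disjoint A B)
    (hA'A : A' ⊆ A) (hB'B : B' ⊆ B)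
    (hadj : ∀ x ∈ A, ∀ y ∈ B, (G.Adj x y ↔ (x ∈ A' ∧ y ∈ B')))
    {a1 a2 b1 b2 : V} (ha1 : a1 ∈ A') (ha2 : a2 ∈ A') (hb1 : b1 ∈ B') (hb2 : b2 ∈ B')
    (ho1 : f a1 < f a2) (ho2 : f b1 < f b2) (ho3 : f a1 < f b1) : False := by
  have adj' : ∀ x ∈ A', ∀ y ∈ B', G.Adj x y :=
    fun x hx y hy => (hadj x (hA'A hx) y (hB'B hy)).mpr ⟨hx, hy⟩
  have e11 : G.Adj a1 b1 := adj' _ ha1 _ hb1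
  have e12 : G.Adj a1 b2 := adj' _ ha1 _ hb2
  have e21 : G.Adj a2 b1 := adj' _ ha2 _ hb1
  have e22 : G.Adj a2 b2 := adj' _ ha2 _ hb2
  have hne1 : f b1 ≠ f a2 := fun h => e21.ne (hf h).symm
  have hne2 : f b2 ≠ f a2 := fun h => e22.ne (hf h).symm
  rcases lt_or_gt_of_ne hne1 with h | h
  · rcases lt_or_gt_of_ne hne2 with h' | h'
    · exact hout a1 b2 b1 a2 e12 e21.symm (by omega) (by omega) (by omega)
    · exact core hf hout hcard h2 hcov hdisj hA'A hB'B hadj ha1 ha2 hb1 hb2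
        (by omega) (by omega) (by omega)
  · exact hout a1 b1 a2 b2 e11 e22 (by omega) (by omega) (by omega)

lemma dispatch [Finite V] {f : V → ℕ} (hf : Function.Injective f)
    (hout : ∀ a b c d, G.Adj a b → G.Adj c d → f a < f c → f c < f b → f b < f d → False)
    (hcard : 5 ≤ Nat.card V)
    (h2 : ∀ v : V, (G.induce {x | x ≠ v}).Connected)
    {A B A' B' : Set V} (hcov : A ∪ B = Set.univ) (hdisj : Disjoint A B)
    (hA'A : A' ⊆ A) (hB'B : B' ⊆ B)
    (hadj : ∀ x ∈ A, ∀ y ∈ B, (G.Adj x y ↔ (x ∈ A' ∧ y ∈ B')))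
    {a1 a2 b1 b2 : V} (ha1 : a1 ∈ A') (ha2 : a2 ∈ A') (hb1 : b1 ∈ B') (hb2 : b2 ∈ B')
    (hne_a : a1 ≠ a2) (hne_b : b1 ≠ b2) : False := by
  have hcov' : B ∪ A = Set.univ := by rw [Set.union_comm]; exact hcov
  have hadj' : ∀ x ∈ B, ∀ y ∈ A, (G.Adj x y ↔ (x ∈ B' ∧ y ∈ A')) := by
    intro x hx y hy
    rw [SimpleGraph.adj_comm, hadj y hy x hx, and_comm]
  obtain ⟨u1, u2, hu1, hu2, huo⟩ : ∃ u1 u2, u1 ∈ A' ∧ u2 ∈ A' ∧ f u1 < f u2 := by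
    rcases lt_or_gt_of_ne (show f a1 ≠ f a2 from fun h => hne_a (hf h)) with h | h
    exacts [⟨a1, a2, ha1, ha2, h⟩, ⟨a2, a1, ha2, ha1, h⟩]
  obtain ⟨w1, w2, hw1, hw2, hwo⟩ : ∃ w1 w2, w1 ∈ B' ∧ w2 ∈ B' ∧ f w1 < f w2 := by
    rcases lt_or_gt_of_ne (show f b1 ≠ f b2 from fun h => hne_b (hf h)) with h | h
    exacts [⟨b1, b2, hb1, hb2, h⟩, ⟨b2, b1, hb2, hb1, h⟩]
  have hne : f u1 ≠ f w1 := fun h =>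
    Set.disjoint_left.mp hdisj (hA'A hu1) ((hf h) ▸ hB'B hw1)
  rcases lt_or_gt_of_ne hne with h | h
  · exact core4 hf hout hcard h2 hcov hdisj hA'A hB'B hadj hu1 hu2 hw1 hw2 huo hwo h
  · exact core4 hf hout hcard h2 hcov' hdisj.symm hB'B hA'A hadj' hw1 hw2 hu1 hu2 hwo huo h

end Aux2


section AuxMore
variable {G : SimpleGraph V}

lemma split_of_sep [Finite V] {v : V} {S T : Set V}
    (hcov : ∀ x, x ≠ v → x ∈ S ∨ x ∈ T)
    (hdisj : ∀ x, x ∈ S → x ∉ T) (hvS : v ∉ S) (hvT : v ∉ T)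
    (hS : S.Nonempty) (hT : 2 ≤ T.ncard)
    (hsep : ∀ x ∈ S, ∀ y ∈ T, ¬ G.Adj x y) :
    ∃ A B : Set V, IsSplit G A B := by
  refine ⟨insert v S, T, ?_, ?_, ?_, hT, {v}, {y | y ∈ T ∧ G.Adj v y}, ?_, ?_, ?_⟩
  · ext x
    simp only [Set.mem_union, Set.mem_insert_iff, Set.mem_univ, iff_true]
    by_cases hx : x = v
    · exact Or.inl (Or.inl hx)
    · rcases hcov x hx with h | h
      · exact Or.inl (Or.inr h)
      · exact Or.inr h
  · rw [Set.disjoint_left]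
    rintro x (rfl | hx)
    · exact hvT
    · exact hdisj x hx
  · rw [Set.ncard_insert_of_notMem hvS]
    have := (Set.ncard_pos).mpr hS
    omega
  · intro x hx
    simp only [Set.mem_singleton_iff] at hx
    exact hx ▸ Set.mem_insert v S
  · intro y hy
    exact hy.1
  · rintro x (rfl | hx) y hy
    · simp only [Set.mem_singleton_iff, Set.mem_setOf_eq, true_and]
      tauto
    · constructor
      · intro h; exact absurd h (hsep x hx y hy)
      · rintro ⟨rfl, -⟩; exact absurd hx hvS

lemma split_of_not_twoConnected [Finite V] (hcard : 5 ≤ Nat.card V)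
    (hntc : ¬ TwoConnected G) : ∃ A B : Set V, IsSplit G A B := by
  rw [TwoConnected, not_and_or] at hntc
  rcases hntc with h | h
  · omega
  push_neg at h
  obtain ⟨v, hnc⟩ := h
  have hnt : Nontrivial V := Finite.one_lt_card_iff_nontrivial.mp (by omega)
  haveI hne : Nonempty {x : V // x ∈ {x : V | x ≠ v}} := by
    obtain ⟨u, hu⟩ := exists_ne v
    exact ⟨⟨u, hu⟩⟩
  have hnp : ¬ (G.induce {x | x ≠ v}).Preconnected := by
    intro hp
    exact hnc ⟨hp⟩
  rw [SimpleGraph.Preconnected] at hnp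
  push_neg at hnp
  obtain ⟨u₀, b₀, hnr⟩ := hnp
  set H := G.induce {x : V | x ≠ v} with hH
  set S : Set V := {x | ∃ h : x ≠ v, H.Reachable u₀ ⟨x, h⟩} with hSdef
  set T : Set V := {x | x ≠ v ∧ x ∉ S} with hTdef
  have huS : u₀.1 ∈ S := ⟨u₀.2, by rw [Subtype.eta]⟩
  have hbT : b₀.1 ∈ T := by
    refine ⟨b₀.2, fun ⟨h, hr⟩ => hnr ?_⟩
    rwa [Subtype.eta] at hr
  have hcov : ∀ x, x ≠ v → x ∈ S ∨ x ∈ T := by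
    intro x hx
    by_cases h : x ∈ S
    · exact Or.inl h
    · exact Or.inr ⟨hx, h⟩
  have hdisj : ∀ x, x ∈ S → x ∉ T := fun x hx ht => ht.2 hx
  have hvS : v ∉ S := fun ⟨h, _⟩ => h rfl
  have hvT : v ∉ T := fun h => h.1 rfl
  have hsep : ∀ x ∈ S, ∀ y ∈ T, ¬ G.Adj x y := by
    rintro x ⟨hxv, hr⟩ y ⟨hyv, hyS⟩ hadj
    exact hyS ⟨hyv, hr.trans (SimpleGraph.Adj.reachable (by exact hadj))⟩
  -- cardinalities
  have hcompl : S.ncard + T.ncard = Nat.card V - 1 := by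
    have h1 : S ∪ T = {x : V | x ≠ v} := by
      ext x
      constructor
      · rintro (⟨h, -⟩ | ⟨h, -⟩) <;> exact h
      · intro hx; exact hcov x hx
    have h2 : Disjoint S T := Set.disjoint_left.mpr hdisj
    have h3 : (S ∪ T).ncard = S.ncard + T.ncard := Set.ncard_union_eq h2
    have h4 : ({x : V | x ≠ v}).ncard = Nat.card V - 1 := by
      have := Set.ncard_add_ncard_compl ({v} : Set V)
      have h5 : ({v} : Set V)ᶜ = {x : V | x ≠ v} := by ext x; simp
      rw [h5, Set.ncard_singleton] at this
      omega
    rw [h1, h4] at h3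
    omega
  have hSne : S.Nonempty := ⟨u₀.1, huS⟩
  have hTne : T.Nonempty := ⟨b₀.1, hbT⟩
  by_cases hT2 : 2 ≤ T.ncard
  · exact split_of_sep hcov hdisj hvS hvT hSne hT2 hsep
  · have hS2 : 2 ≤ S.ncard := by
      have := hTne.ncard_pos
      omega
    exact split_of_sep (fun x hx => (hcov x hx).symm) (fun x hx hs => hdisj x hs hx)
      hvT hvS hTne hS2 (fun x hx y hy hadj => hsep y hy x hx hadj.symm)

end AuxMore

/-- An outerplanar graph with at least 5 vertices is prime iff it is
2-connected (in particular every 2-connected outerplanar graph with ≥ 5 vertices is prime). -/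
theorem outerplanar_prime_iff_twoConnected {V : Type*} [Finite V] (G : SimpleGraph V)
    (hcard : 5 ≤ Nat.card V) (hout : Outerplanar G) :
    IsPrime G ↔ TwoConnected G := by
  obtain ⟨f, hf, houtf⟩ := hout
  constructor
  · intro hp
    by_contra hntc
    exact hp (split_of_not_twoConnected hcard hntc)
  · rintro ⟨-, h2⟩ ⟨A, B, hcov, hdisj, hA2, hB2, A', B', hA'A, hB'B, hadj⟩
    have hcov' : B ∪ A = Set.univ := by rw [Set.union_comm]; exact hcov
    have hadj' : ∀ x ∈ B, ∀ y ∈ A, (G.Adj x y ↔ (x ∈ B' ∧ y ∈ A')) := by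
      intro x hx y hy
      rw [SimpleGraph.adj_comm, hadj y hy x hx, and_comm]
    by_cases hAsmall : ∃ v ∈ A, A' ⊆ {v}
    · obtain ⟨v, hvA, hsub⟩ := hAsmall
      exact small_side h2 hcov hdisj hA2 hB2 hadj hvA hsub
    by_cases hBsmall : ∃ v ∈ B, B' ⊆ {v}
    · obtain ⟨v, hvB, hsub⟩ := hBsmall
      exact small_side h2 hcov' hdisj.symm hB2 hA2 hadj' hvB hsub
    have hA'two : ∃ a1 a2, a1 ∈ A' ∧ a2 ∈ A' ∧ a1 ≠ a2 := by
      by_contra h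
      push_neg at h
      rcases Set.eq_empty_or_nonempty A' with he | ⟨a, ha⟩
      · obtain ⟨v, hvA⟩ := Set.nonempty_of_ncard_ne_zero (s := A) (by omega)
        exact hAsmall ⟨v, hvA, by simp [he]⟩
      · exact hAsmall ⟨a, hA'A ha, fun x hx => by simp [h x a hx ha]⟩
    have hB'two : ∃ b1 b2, b1 ∈ B' ∧ b2 ∈ B' ∧ b1 ≠ b2 := by
      by_contra h
      push_neg at h
      rcases Set.eq_empty_or_nonempty B' with he | ⟨b, hb⟩
      · obtain ⟨v, hvB⟩ := Set.nonempty_of_ncard_ne_zero (s := B) (by omega)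
        exact hBsmall ⟨v, hvB, by simp [he]⟩
      · exact hBsmall ⟨b, hB'B hb, fun x hx => by simp [h x b hx hb]⟩
    obtain ⟨a1, a2, ha1, ha2, hne_a⟩ := hA'two
    obtain ⟨b1, b2, hb1, hb2, hne_b⟩ := hB'two
    exact dispatch hf houtf hcard h2 hcov hdisj hA'A hB'B hadj ha1 ha2 hb1 hb2 hne_a hne_b
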